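/- Soundness and completeness of the SR calculus: assume Eval is strategy-independent, i.e. there is sat : {1,…,N} → Bool with Eval(i, v) = sat(i) for all v ∈ V. Then for any initial strategy v₀, dataset D₀ and oracle O₀, ⟨1, v₀, D₀, O₀⟩ ⟹* Success in the SR calculus if and only if there exists i ∈ {1,…,N} with sat(i) = true. -/

import Mathlib

open scoped Classical

/-- The result of evaluating a formula with a strategy: `sat` or `unsat`. -/
inductive Result where
  | sat
  | unsat
deriving DecidableEq

/-- Configurations of the SR calculus: `Success`, `Failure`, or a tuple
`⟨i, v, D, O⟩` of an index, a strategy, a finite dataset and an oracle. -/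
inductive SRConfig (V : Type) where
  | success
  | failure
  | state (i : ℕ) (v : V) (D : Finset (V × ℕ × ℝ)) (O : V → ℕ → ℝ)

/-- The transition relation `⟹` of the SR calculus, with bound `N`, evaluation
function `Eval`, cost function `cost`, and learning algorithm `fit`. -/
inductive SRStep {V : Type} (N : ℕ) (Eval : ℕ → V → Result) (cost : ℕ → V → ℝ)
    (fit : Finset (V × ℕ × ℝ) → V → ℕ → ℝ) : SRConfig V → SRConfig V → Prop
  | next {i : ℕ} {v : V} {D : Finset (V × ℕ × ℝ)} {O : V → ℕ → ℝ} :
      i < N → Eval i v = Result.unsat →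
      SRStep N Eval cost fit (SRConfig.state i v D O) (SRConfig.state (i + 1) v D O)
  | failure {v : V} {D : Finset (V × ℕ × ℝ)} {O : V → ℕ → ℝ} :
      Eval N v = Result.unsat →
      SRStep N Eval cost fit (SRConfig.state N v D O) SRConfig.failure
  | success {i : ℕ} {v : V} {D : Finset (V × ℕ × ℝ)} {O : V → ℕ → ℝ} :
      Eval i v = Result.sat →
      SRStep N Eval cost fit (SRConfig.state i v D O) SRConfig.success
  | collect {i : ℕ} {v : V} {D : Finset (V × ℕ × ℝ)} {O : V → ℕ → ℝ}
      (vₛ : V) (j : ℕ) : 1 ≤ j → j ≤ i →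
      SRStep N Eval cost fit (SRConfig.state i v D O)
        (SRConfig.state i v (insert (vₛ, j, cost j vₛ) D) O)
  | train {i : ℕ} {v : V} {D : Finset (V × ℕ × ℝ)} {O : V → ℕ → ℝ} :
      SRStep N Eval cost fit (SRConfig.state i v D O) (SRConfig.state i v D (fit D))
  | strategize {i : ℕ} {v : V} {D : Finset (V × ℕ × ℝ)} {O : V → ℕ → ℝ}
      (Vₛ : Finset V) (v' : V) : Vₛ.Nonempty → v' ∈ Vₛ → (∀ w ∈ Vₛ, O v' i ≤ O w i) →
      SRStep N Eval cost fit (SRConfig.state i v D O) (SRConfig.state i v' D O)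

/-- Soundness and completeness of the SR calculus: if `Eval` is
strategy-independent, i.e. `Eval(i, v) = sat(i)` for some `sat : {1,…,N} → Bool`,
then `⟨1, v₀, D₀, O₀⟩ ⟹* Success` iff there exists `i ∈ {1,…,N}` with
`sat(i) = true`. -/
theorem sr_sound_complete {V : Type} (N : ℕ) (hN : 1 ≤ N) (Eval : ℕ → V → Result)
    (cost : ℕ → V → ℝ) (fit : Finset (V × ℕ × ℝ) → V → ℕ → ℝ)
    (isSat : ℕ → Bool)
    (hEval : ∀ (i : ℕ) (v : V), Eval i v = if isSat i then Result.sat else Result.unsat)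
    (v₀ : V) (D₀ : Finset (V × ℕ × ℝ)) (O₀ : V → ℕ → ℝ) :
    Relation.ReflTransGen (SRStep N Eval cost fit) (SRConfig.state 1 v₀ D₀ O₀)
        SRConfig.success ↔
      ∃ i : ℕ, 1 ≤ i ∧ i ≤ N ∧ isSat i = true := by
  constructor
  · -- soundness
    intro h
    -- failure cannot reach success
    have hfail : ¬ Relation.ReflTransGen (SRStep N Eval cost fit) SRConfig.failure
        SRConfig.success := by
      intro h
      cases h.cases_head with
      | inl h => cases h
      | inr h => obtain ⟨c, hc, _⟩ := h; cases hc
    have aux : ∀ c : SRConfig V,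
        Relation.ReflTransGen (SRStep N Eval cost fit) c SRConfig.success →
        ∀ i v D O, c = SRConfig.state i v D O → 1 ≤ i → i ≤ N →
        ∃ j : ℕ, 1 ≤ j ∧ j ≤ N ∧ isSat j = true := by
      intro c hc
      induction hc using Relation.ReflTransGen.head_induction_on with
      | refl => intro i v D O h; exact absurd h (by simp)
      | head hstep _ ih =>
        intro i v D O heq h1 hN'
        subst heq
        cases hstep with
        | next hi he =>
          exact ih _ _ _ _ rfl (le_trans h1 (Nat.le_succ _)) hi
        | failure he => exact absurd (by assumption) hfail
        | success he =>
          refine ⟨i, h1, hN', ?_⟩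
          rw [hEval] at he
          by_contra hb
          simp [hb] at he
        | collect vs j hj1 hj2 => exact ih _ _ _ _ rfl h1 hN'
        | train => exact ih _ _ _ _ rfl h1 hN'
        | strategize Vs v' hne hmem hmin => exact ih _ _ _ _ rfl h1 hN'
    exact aux _ h 1 v₀ D₀ O₀ rfl le_rfl hN
  · -- completeness
    rintro ⟨i, h1, hiN, hsat⟩
    -- take minimal sat index
    have hex : ∃ j : ℕ, 1 ≤ j ∧ j ≤ N ∧ isSat j = true := ⟨i, h1, hiN, hsat⟩
    set m := Nat.find hex with hm
    obtain ⟨hm1, hmN, hmsat⟩ := Nat.find_spec hex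
    have hmin : ∀ k, k < m → ¬(1 ≤ k ∧ k ≤ N ∧ isSat k = true) :=
      fun k hk => Nat.find_min hex hk
    -- walk from 1 to m
    have walk : ∀ k : ℕ, 1 ≤ k → k ≤ m →
        Relation.ReflTransGen (SRStep N Eval cost fit) (SRConfig.state 1 v₀ D₀ O₀)
          (SRConfig.state k v₀ D₀ O₀) := by
      intro k
      induction k with
      | zero => omega
      | succ n ih =>
        intro h1 hk
        rcases Nat.eq_or_lt_of_le h1 with h | h
        · rw [← h]
        · have hn1 : 1 ≤ n := by omega
          have hnm : n ≤ m := by omega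
          refine (ih hn1 hnm).tail (SRStep.next (by omega) ?_)
          have : isSat n = false := by
            by_contra hb
            have := hmin n (by omega)
            simp at hb
            exact this ⟨hn1, by omega, hb⟩
          rw [hEval, this]
          simp
    exact (walk m hm1 le_rfl).tail (SRStep.success (by rw [hEval, hmsat]; simp))
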